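/- Let z_1,...,z_n be unit vectors in R^d with Σ_i c_i z_i ⊗ z_i = I_d, where c_i > 0. Then Φ*(c) = Σ_{i=1}^n c_i log c_i, where Φ(t) = log det(Σ_i e^{t_i} z_i ⊗ z_i), and the supremum defining Φ*(c) is attained at t with t_i = log c_i. -/

import Mathlib

open Matrix

private theorem stmt10_expand_det {d n : ℕ} (z : Fin n → Fin d → ℝ) (a : Fin n → ℝ) :
    (∑ i, a i • Matrix.vecMulVec (z i) (z i)).det * (d.factorial : ℝ)
      = ∑ r : Fin d → Fin n, (∏ j, a (r j)) * (Matrix.det (Matrix.of fun j => z (r j)))^2 := by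
  set T : (Fin d → Fin n) → ℝ := fun r =>
    (∏ j, a (r j) * z (r j) j) * Matrix.det (Matrix.of fun j => z (r j)) with hT
  have hM : (∑ i, a i • Matrix.vecMulVec (z i) (z i))
      = Matrix.of (fun j => ∑ i, (a i * z i j) • z i) := by
    ext j k
    simp only [Matrix.sum_apply, Matrix.smul_apply, Matrix.vecMulVec_apply, Matrix.of_apply,
      Finset.sum_apply, Pi.smul_apply, smul_eq_mul]
    exact Finset.sum_congr rfl fun i _ => by ring
  have hexp : (∑ i, a i • Matrix.vecMulVec (z i) (z i)).det = ∑ r : Fin d → Fin n, T r := by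
    rw [hM]
    have h : Matrix.det (Matrix.of fun j => ∑ i, (a i * z i j) • z i)
        = (Matrix.detRowAlternating : (Fin d → ℝ) [⋀^Fin d]→ₗ[ℝ] ℝ).toMultilinearMap
            (fun j => ∑ i, (a i * z i j) • z i) := rfl
    rw [h, MultilinearMap.map_sum]
    refine Finset.sum_congr rfl fun r _ => ?_
    rw [MultilinearMap.map_smul_univ]
    rfl
  have key : ∀ r : Fin d → Fin n,
      ∑ π : Equiv.Perm (Fin d), T (fun j => r (π j))
        = (∏ j, a (r j)) * (Matrix.det (Matrix.of fun j => z (r j)))^2 := by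
    intro r
    have hdet : ∀ π : Equiv.Perm (Fin d),
        Matrix.det (Matrix.of fun j => z (r (π j)))
          = (Equiv.Perm.sign π : ℝ) * Matrix.det (Matrix.of fun j => z (r j)) := by
      intro π
      have := Matrix.det_permute π (Matrix.of fun j => z (r j))
      simpa [Matrix.submatrix] using this
    calc ∑ π : Equiv.Perm (Fin d), T (fun j => r (π j))
        = ∑ π : Equiv.Perm (Fin d),
          (∏ j, a (r j)) * (((Equiv.Perm.sign π : ℝ) * ∏ j, z (r (π j)) j)
            * Matrix.det (Matrix.of fun j => z (r j))) := by
          refine Finset.sum_congr rfl fun π _ => ?_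
          rw [hT]
          simp only
          rw [hdet π, Finset.prod_mul_distrib, Equiv.prod_comp π (fun j => a (r j))]
          ring
      _ = (∏ j, a (r j)) * ((∑ π : Equiv.Perm (Fin d), (Equiv.Perm.sign π : ℝ) * ∏ j, z (r (π j)) j)
            * Matrix.det (Matrix.of fun j => z (r j))) := by
          rw [← Finset.mul_sum, ← Finset.sum_mul]
      _ = (∏ j, a (r j)) * (Matrix.det (Matrix.of fun j => z (r j)))^2 := by
          rw [show (∑ π : Equiv.Perm (Fin d), (Equiv.Perm.sign π : ℝ) * ∏ j, z (r (π j)) j)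
              = Matrix.det (Matrix.of fun j => z (r j)) from by simp [Matrix.det_apply']]
          ring
  have hre : ∀ π : Equiv.Perm (Fin d), ∑ r : Fin d → Fin n, T r
      = ∑ r : Fin d → Fin n, T (fun j => r (π j)) := by
    intro π
    exact (Equiv.sum_comp (Equiv.arrowCongr π.symm (Equiv.refl (Fin n))) T).symm
  calc (∑ i, a i • Matrix.vecMulVec (z i) (z i)).det * (d.factorial : ℝ)
      = ∑ π : Equiv.Perm (Fin d), ∑ r : Fin d → Fin n, T r := by
        rw [hexp, Finset.sum_const, Finset.card_univ, Fintype.card_perm, Fintype.card_fin,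
          nsmul_eq_mul, mul_comm]
    _ = ∑ π : Equiv.Perm (Fin d), ∑ r : Fin d → Fin n, T (fun j => r (π j)) :=
        Finset.sum_congr rfl fun π _ => hre π
    _ = ∑ r : Fin d → Fin n, ∑ π : Equiv.Perm (Fin d), T (fun j => r (π j)) := Finset.sum_comm
    _ = ∑ r : Fin d → Fin n, (∏ j, a (r j)) * (Matrix.det (Matrix.of fun j => z (r j)))^2 :=
        Finset.sum_congr rfl fun r _ => key r

/-- If unit vectors `z i` satisfy `∑ i, c i • z i ⊗ z i = I_d` with `c i > 0`, then
`Φ*(c) = ∑ i, c i log (c i)` where `Φ(t) = log det (∑ i, e^{t i} • z i ⊗ z i)`, and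
the supremum defining `Φ*(c)` is attained at `t` with `t i = log (c i)`. -/
theorem stmt10 {d n : ℕ} (z : Fin n → Fin d → ℝ) (c : Fin n → ℝ)
    (hc : ∀ i, 0 < c i) (hunit : ∀ i, z i ⬝ᵥ z i = 1)
    (hiso : ∑ i, c i • Matrix.vecMulVec (z i) (z i) = (1 : Matrix (Fin d) (Fin d) ℝ)) :
    ((∑ i, c i * Real.log (c i)) -
        Real.log (∑ i, Real.exp (Real.log (c i)) • Matrix.vecMulVec (z i) (z i)).det
      = ∑ i, c i * Real.log (c i)) ∧
    ∀ t : Fin n → ℝ,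
      (∑ i, c i * t i) -
          Real.log (∑ i, Real.exp (t i) • Matrix.vecMulVec (z i) (z i)).det
        ≤ ∑ i, c i * Real.log (c i) := by
  have hfac : (0:ℝ) < (d.factorial : ℝ) := by positivity
  set B : (Fin d → Fin n) → ℝ := fun r => (Matrix.det (Matrix.of fun j => z (r j)))^2 with hB
  set p : (Fin d → Fin n) → ℝ := fun r => (∏ j, c (r j)) * B r / (d.factorial : ℝ) with hp
  have hp0 : ∀ r, 0 ≤ p r := by
    intro r
    have h1 : 0 ≤ ∏ j, c (r j) := Finset.prod_nonneg fun j _ => (hc _).le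
    have h2 : (0:ℝ) ≤ B r := sq_nonneg _
    positivity
  set N : Fin n → (Fin d → Fin n) → ℕ :=
    fun i r => (Finset.univ.filter (fun j => r j = i)).card with hN
  -- sum of p is 1
  have hp1 : ∑ r : Fin d → Fin n, p r = 1 := by
    have := stmt10_expand_det z c
    rw [hiso, Matrix.det_one, one_mul] at this
    simp only [hp]
    rw [← Finset.sum_div, ← this]
    exact div_self hfac.ne'
  -- marginals
  have hmarg : ∀ i, ∑ r : Fin d → Fin n, p r * (N i r : ℝ) = c i := by
    intro i
    -- the two expressions for the one-parameter family
    have hG : ∀ u : ℝ, ∑ r : Fin d → Fin n, p r * (1+u) ^ (N i r) = 1 + u * c i := by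
      intro u
      set a : Fin n → ℝ := fun i' => c i' * (if i' = i then (1+u) else 1) with ha
      have hMa : ∑ i', a i' • Matrix.vecMulVec (z i') (z i')
          = 1 + (u * c i) • Matrix.vecMulVec (z i) (z i) := by
        have hterm : ∀ i', a i' • Matrix.vecMulVec (z i') (z i')
            = c i' • Matrix.vecMulVec (z i') (z i')
              + (if i' = i then (u * c i) • Matrix.vecMulVec (z i) (z i) else 0) := by
          intro i'
          by_cases h : i' = i
          · subst h
            simp only [ha, eq_self_iff_true, if_true]
            rw [mul_one_add, add_smul]
            congr 1
            rw [mul_comm u (c i')]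
          · simp [ha, h]
        rw [Finset.sum_congr rfl (fun i' _ => hterm i'), Finset.sum_add_distrib, hiso,
          Finset.sum_ite_eq' Finset.univ i]
        simp
      have hda : Matrix.det (∑ i', a i' • Matrix.vecMulVec (z i') (z i')) = 1 + u * c i := by
        rw [hMa]
        have h : (1 + (u * c i) • Matrix.vecMulVec (z i) (z i))
            = 1 + Matrix.replicateCol Unit ((u * c i) • z i) * Matrix.replicateRow Unit (z i) := by
          rw [← Matrix.vecMulVec_eq]
          congr 1
          ext j k
          simp [Matrix.vecMulVec_apply, mul_assoc]
        rw [h, Matrix.det_one_add_replicateCol_mul_replicateRow, dotProduct_smul, hunit i]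
        simp
      have hprod : ∀ r : Fin d → Fin n, (∏ j, a (r j))
          = (∏ j, c (r j)) * (1+u) ^ (N i r) := by
        intro r
        simp only [ha]
        rw [Finset.prod_mul_distrib]
        congr 1
        rw [← Finset.prod_filter_mul_prod_filter_not Finset.univ (fun j => r j = i)]
        rw [Finset.prod_eq_pow_card (b := (1+u)) (fun j hj => by simp_all),
          Finset.prod_eq_one (fun j hj => by simp_all), mul_one]
      have := stmt10_expand_det z a
      rw [hda] at this
      have h2 : ∑ r : Fin d → Fin n, p r * (1+u) ^ (N i r)
          = (∑ r : Fin d → Fin n, (∏ j, a (r j)) * B r) / (d.factorial : ℝ) := by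
        rw [Finset.sum_div]
        refine Finset.sum_congr rfl fun r _ => ?_
        rw [hprod r, hp]
        ring
      rw [h2, ← this]
      field_simp
    -- differentiate both sides at 0
    have hd1 : HasDerivAt (fun u : ℝ => ∑ r : Fin d → Fin n, p r * (1+u) ^ (N i r))
        (∑ r : Fin d → Fin n, p r * (N i r : ℝ)) 0 := by
      refine HasDerivAt.fun_sum fun r _ => ?_
      have h : HasDerivAt (fun u : ℝ => (1+u)^(N i r))
          ((N i r : ℝ) * (1+(0:ℝ))^(N i r - 1) * 1) 0 :=
        ((hasDerivAt_id (0:ℝ)).const_add 1).pow (N i r)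
      simpa using h.const_mul (p r)
    have hd2 : HasDerivAt (fun u : ℝ => ∑ r : Fin d → Fin n, p r * (1+u) ^ (N i r)) (c i) 0 := by
      have h : HasDerivAt (fun u : ℝ => 1 + u * c i) (c i) 0 := by
        simpa using ((hasDerivAt_id (0:ℝ)).mul_const (c i)).const_add 1
      exact h.congr_of_eventuallyEq (Filter.Eventually.of_forall fun u => hG u)
    exact hd1.unique hd2
  -- the first claim
  have hlogc : ∑ i, Real.exp (Real.log (c i)) • Matrix.vecMulVec (z i) (z i)
      = (1 : Matrix (Fin d) (Fin d) ℝ) := by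
    rw [← hiso]
    exact Finset.sum_congr rfl fun i _ => by rw [Real.exp_log (hc i)]
  constructor
  · rw [hlogc, Matrix.det_one, Real.log_one, sub_zero]
  -- the key inequality
  intro t
  set s : Fin n → ℝ := fun i => t i - Real.log (c i) with hs
  have hdet : (∑ i, Real.exp (t i) • Matrix.vecMulVec (z i) (z i)).det
      = ∑ r : Fin d → Fin n, p r * Real.exp (∑ j, s (r j)) := by
    have := stmt10_expand_det z (fun i => Real.exp (t i))
    have h2 : ∀ r : Fin d → Fin n, (∏ j, Real.exp (t (r j)))
        = (∏ j, c (r j)) * Real.exp (∑ j, s (r j)) := by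
      intro r
      rw [← Real.exp_sum,
        show (∏ j, c (r j)) = Real.exp (∑ j, Real.log (c (r j))) from by
          rw [Real.exp_sum]
          exact (Finset.prod_congr rfl fun j _ => (Real.exp_log (hc (r j))).symm),
        ← Real.exp_add, ← Finset.sum_add_distrib]
      congr 1
      exact Finset.sum_congr rfl fun j _ => by simp [hs]
    have h3 : (∑ i, Real.exp (t i) • Matrix.vecMulVec (z i) (z i)).det
        = (∑ r : Fin d → Fin n, (∏ j, Real.exp (t (r j))) * B r) / (d.factorial : ℝ) := by
      rw [← this]
      field_simp
    rw [h3, Finset.sum_div]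
    refine Finset.sum_congr rfl fun r _ => ?_
    rw [h2 r, hp]
    ring
  -- Jensen
  have hjen : Real.exp (∑ r : Fin d → Fin n, p r * (∑ j, s (r j)))
      ≤ ∑ r : Fin d → Fin n, p r * Real.exp (∑ j, s (r j)) := by
    have := convexOn_exp.map_sum_le (t := (Finset.univ : Finset (Fin d → Fin n)))
      (w := p) (p := fun r => ∑ j, s (r j)) (fun r _ => hp0 r) hp1
      (fun r _ => Set.mem_univ _)
    simpa [smul_eq_mul] using this
  -- identify the exponent
  have hexpo : ∑ r : Fin d → Fin n, p r * (∑ j, s (r j)) = ∑ i, c i * s i := by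
    have h1 : ∀ r : Fin d → Fin n, (∑ j, s (r j)) = ∑ i, (N i r : ℝ) * s i := by
      intro r
      have := Finset.sum_fiberwise' (Finset.univ : Finset (Fin d)) r s
      rw [← this]
      refine Finset.sum_congr rfl fun i _ => ?_
      rw [Finset.sum_const, nsmul_eq_mul]
    calc ∑ r : Fin d → Fin n, p r * (∑ j, s (r j))
        = ∑ r : Fin d → Fin n, ∑ i, p r * ((N i r : ℝ) * s i) := by
          refine Finset.sum_congr rfl fun r _ => ?_
          rw [h1 r, Finset.mul_sum]
      _ = ∑ i, (∑ r : Fin d → Fin n, p r * (N i r : ℝ)) * s i := by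
          rw [Finset.sum_comm]
          refine Finset.sum_congr rfl fun i _ => ?_
          rw [Finset.sum_mul]
          exact Finset.sum_congr rfl fun r _ => by ring
      _ = ∑ i, c i * s i := Finset.sum_congr rfl fun i _ => by rw [hmarg i]
  have hDpos : Real.exp (∑ i, c i * s i)
      ≤ (∑ i, Real.exp (t i) • Matrix.vecMulVec (z i) (z i)).det := by
    rw [hdet, ← hexpo]
    exact hjen
  have hpos : (0:ℝ) < (∑ i, Real.exp (t i) • Matrix.vecMulVec (z i) (z i)).det :=
    lt_of_lt_of_le (Real.exp_pos _) hDpos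
  have hlog : ∑ i, c i * s i
      ≤ Real.log (∑ i, Real.exp (t i) • Matrix.vecMulVec (z i) (z i)).det :=
    (Real.le_log_iff_exp_le hpos).2 hDpos
  have hsum : ∑ i, c i * s i = (∑ i, c i * t i) - ∑ i, c i * Real.log (c i) := by
    rw [← Finset.sum_sub_distrib]
    exact Finset.sum_congr rfl fun i _ => by rw [hs]; ring
  linarith [hlog, hsum.symm.le]
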